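/- arXiv:1502.07787 — 2 statements merged into one kernel-verified Lean document; each statement's English description precedes it below -/
import Mathlib

section
/- Let S ⊆ H_N be a 𝒫-symmetric set, let v ∈ m(S), and set S_v = {x ∈ S : m(x) = v}. For each i ∈ {1,…,k} let I_i, O_i ⊆ P_i be disjoint subsets, and let A_i = {x ∈ H_N : x_e = 1 for all e ∈ I_i and x_e = 0 for all e ∈ O_i}. Then the events A_1,…,A_k are independent under the uniform distribution on S_v; equivalently, as a counting identity: |S_v ∩ A_1 ∩ ⋯ ∩ A_k| · |S_v|^{k−1} = ∏_{i=1}^k |S_v ∩ A_i|. -/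
open Finset

/-- The edge profile of `x : Fin N → Bool` with respect to the parts `P i`:
`m i x` is the number of coordinates in `P i` where `x` equals `true`. -/
def edgeProfile {N k : ℕ} (P : Fin k → Finset (Fin N)) (x : Fin N → Bool) (i : Fin k) : ℕ :=
  ∑ e ∈ P i, if x e then 1 else 0

section Aux

variable {N k : ℕ} (f : Fin N → Fin k)

/-- Restricting a global boolean assignment to the fibers of `f`. -/
def restrictEquiv : (Fin N → Bool) ≃ ∀ i, ({b : Fin N // f b = i} → Bool) :=
  ((Equiv.arrowCongr (Equiv.sigmaFiberEquiv f) (Equiv.refl Bool)).symm).trans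
    (Equiv.piCurry fun _ _ => Bool)

lemma restrictEquiv_apply (x : Fin N → Bool) (i : Fin k) (a : {b : Fin N // f b = i}) :
    restrictEquiv f x i a = x a.1 := rfl

lemma card_pi_subtype (R : ∀ i : Fin k, ({b : Fin N // f b = i} → Bool) → Prop)
    [∀ i, DecidablePred (R i)] :
    Fintype.card {x : Fin N → Bool // ∀ i, R i (fun a => x a.1)} =
      ∏ i, Fintype.card {g : {b : Fin N // f b = i} → Bool // R i g} := by
  have e : {x : Fin N → Bool // ∀ i, R i (fun a => x a.1)} ≃ ∀ i, {g // R i g} :=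
    (Equiv.subtypeEquiv (restrictEquiv f) (fun x => Iff.rfl)).trans Equiv.subtypePiEquivPi
  rw [Fintype.card_congr e, Fintype.card_pi]

lemma exists_perm (x y : Fin N → Bool)
    (hc : ∀ i, Fintype.card {a : {b : Fin N // f b = i} // y a.1 = true}
             = Fintype.card {a : {b : Fin N // f b = i} // x a.1 = true}) :
    ∃ π : Equiv.Perm (Fin N), (∀ e, f (π e) = f e) ∧ ∀ e, x (π e) = y e := by
  classical
  have hc' : ∀ i, Fintype.card {a : {b : Fin N // f b = i} // ¬ (y a.1 = true)}
             = Fintype.card {a : {b : Fin N // f b = i} // ¬ (x a.1 = true)} := by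
    intro i
    rw [Fintype.card_subtype_compl, Fintype.card_subtype_compl, hc i]
  let σ : ∀ i, Equiv.Perm {b : Fin N // f b = i} := fun i =>
    ((Equiv.sumCompl (fun a : {b : Fin N // f b = i} => y a.1 = true)).symm).trans
      ((Equiv.sumCongr (Fintype.equivOfCardEq (hc i)) (Fintype.equivOfCardEq (hc' i))).trans
        (Equiv.sumCompl (fun a : {b : Fin N // f b = i} => x a.1 = true)))
  have hσ : ∀ i a, x ((σ i a).1) = y a.1 := by
    intro i a
    by_cases h : y a.1 = true
    · have h1 : σ i a = ((Fintype.equivOfCardEq (hc i)) ⟨a, h⟩ : {a // x a.1 = true}).1 := by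
        simp only [σ, Equiv.trans_apply]
        rw [Equiv.sumCompl_symm_apply_of_pos (p := fun a : {b : Fin N // f b = i} => y a.1 = true) (a := a) h]
        simp
      rw [h1, (Fintype.equivOfCardEq (hc i) (⟨a, h⟩ : {a // y a.1 = true})).2, h]
    · have h1 : σ i a = (Fintype.equivOfCardEq (hc' i) (⟨a, h⟩ : {a // ¬ y a.1 = true}) : {a // ¬ x a.1 = true}).1 := by
        simp only [σ, Equiv.trans_apply]
        rw [Equiv.sumCompl_symm_apply_of_neg (p := fun a : {b : Fin N // f b = i} => y a.1 = true) (a := a) h]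
        simp
      have h2 := (Fintype.equivOfCardEq (hc' i) (⟨a, h⟩ : {a // ¬ y a.1 = true})).2
      rw [h1]
      simp only [Bool.not_eq_true] at h h2
      rw [h, h2]
  refine ⟨(Equiv.sigmaFiberEquiv f).symm.trans
      ((Equiv.sigmaCongrRight σ).trans (Equiv.sigmaFiberEquiv f)), ?_, ?_⟩
  · intro e
    exact (σ (f e) ⟨e, rfl⟩).2
  · intro e
    exact hσ (f e) ⟨e, rfl⟩

end Aux

/-- Conditional on the edge profile, the events "all edges of `I i` present and all edges of
`O i` absent" (for `I i, O i ⊆ P i` disjoint) are independent under the uniform measure on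
`S_v = {x ∈ S : m(x) = v}`, stated as the counting identity
`|S_v ∩ A_1 ∩ ⋯ ∩ A_k| ⬝ |S_v|^(k-1) = ∏ i, |S_v ∩ A_i|`. -/
theorem stmt2 (N k : ℕ) (hN : 0 < N)
    (P : Fin k → Finset (Fin N))
    (hne : ∀ i, (P i).Nonempty)
    (hdisj : ∀ i j, i ≠ j → Disjoint (P i) (P j))
    (hcover : ∀ e : Fin N, ∃ i, e ∈ P i)
    (S : Finset (Fin N → Bool))
    (hsym : ∀ (π : Equiv.Perm (Fin N)), (∀ i, (P i).image π = P i) →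
      ∀ x : Fin N → Bool, x ∈ S ↔ (x ∘ π) ∈ S)
    (v : Fin k → ℕ) (hv : v ∈ S.image (edgeProfile P))
    (I O : Fin k → Finset (Fin N))
    (hI : ∀ i, I i ⊆ P i) (hO : ∀ i, O i ⊆ P i)
    (hIO : ∀ i, Disjoint (I i) (O i)) :
    ((S.filter (fun x => edgeProfile P x = v)).filter
        (fun x => ∀ i, (∀ e ∈ I i, x e = true) ∧ (∀ e ∈ O i, x e = false))).card
      * (S.filter (fun x => edgeProfile P x = v)).card ^ (k - 1)
    = ∏ i, ((S.filter (fun x => edgeProfile P x = v)).filter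
        (fun x => (∀ e ∈ I i, x e = true) ∧ (∀ e ∈ O i, x e = false))).card := by
  classical
  have hk : 0 < k := by
    obtain ⟨i, -⟩ := hcover ⟨0, hN⟩
    exact i.pos
  -- the fiber function
  let f : Fin N → Fin k := fun e => (hcover e).choose
  have hfmem : ∀ e, e ∈ P (f e) := fun e => (hcover e).choose_spec
  have hf : ∀ e i, f e = i ↔ e ∈ P i := by
    intro e i
    constructor
    · rintro rfl; exact hfmem e
    · intro hb
      by_contra hne'
      exact (Finset.disjoint_left.mp (hdisj _ _ hne') (hfmem e)) hb
  -- the profile as a cardinality of a subtype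
  have hprof : ∀ (x : Fin N → Bool) i,
      edgeProfile P x i = Fintype.card {a : {b : Fin N // f b = i} // x a.1 = true} := by
    intro x i
    rw [Fintype.card_congr
        (Equiv.subtypeSubtypeEquivSubtypeInter (fun b => f b = i) (fun b => x b = true)),
      Fintype.card_subtype]
    have h1 : (univ.filter fun b => f b = i ∧ x b = true)
        = (P i).filter (fun b => x b = true) := by
      ext b
      simp only [mem_filter, mem_univ, true_and, hf]
    rw [h1, Finset.card_filter]
    rfl
  -- symmetry: the level set of v inside S is the full level set
  obtain ⟨x₀, hx₀S, hx₀v⟩ := Finset.mem_image.mp hv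
  have hSfull : S.filter (fun x => edgeProfile P x = v)
      = univ.filter (fun x => edgeProfile P x = v) := by
    ext y
    simp only [mem_filter, mem_univ, true_and]
    constructor
    · rintro ⟨-, h⟩; exact h
    · intro hy
      refine ⟨?_, hy⟩
      obtain ⟨π, hπf, hπ⟩ := exists_perm f x₀ y (fun i => by rw [← hprof, ← hprof, hy, hx₀v])
      have himg : ∀ i, (P i).image π = P i := by
        intro i
        apply Finset.eq_of_subset_of_card_le
        · intro e he
          simp only [Finset.mem_image] at he
          obtain ⟨b, hb, rfl⟩ := he
          rw [← hf] at hb ⊢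
          rw [hπf, hb]
        · rw [Finset.card_image_of_injective _ π.injective]
      have hmem := (hsym π himg x₀).mp hx₀S
      have hxy : x₀ ∘ π = y := funext fun e => hπ e
      rwa [hxy] at hmem
  -- local conditions
  let lcond : ∀ i, ({b : Fin N // f b = i} → Bool) → Prop := fun i g =>
    Fintype.card {a // g a = true} = v i
  let acond : ∀ i, ({b : Fin N // f b = i} → Bool) → Prop := fun i g =>
    ∀ a, (a.1 ∈ I i → g a = true) ∧ (a.1 ∈ O i → g a = false)
  let n : Fin k → ℕ := fun i => Fintype.card {g // lcond i g}
  let a : Fin k → ℕ := fun i => Fintype.card {g // lcond i g ∧ acond i g}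
  have hprofiff : ∀ x : Fin N → Bool,
      edgeProfile P x = v ↔ ∀ i, lcond i (fun b => x b.1) := by
    intro x
    rw [funext_iff]
    exact forall_congr' fun i => by rw [hprof x i]
  have hA : ∀ (x : Fin N → Bool) (i : Fin k),
      ((∀ e ∈ I i, x e = true) ∧ (∀ e ∈ O i, x e = false)) ↔ acond i (fun b => x b.1) := by
    intro x i
    constructor
    · rintro ⟨h1, h2⟩ b
      exact ⟨fun h => h1 _ h, fun h => h2 _ h⟩
    · intro h
      exact ⟨fun e he => (h ⟨e, (hf e i).mpr (hI i he)⟩).1 he,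
        fun e he => (h ⟨e, (hf e i).mpr (hO i he)⟩).2 he⟩
  -- master counting principle
  have hcount : ∀ (R : ∀ i, ({b : Fin N // f b = i} → Bool) → Prop)
      [∀ i, DecidablePred (R i)],
      (univ.filter (fun x : Fin N → Bool => ∀ i, R i (fun b => x b.1))).card
        = ∏ i, Fintype.card {g // R i g} := by
    intro R _
    rw [← Fintype.card_subtype, card_pi_subtype f R]
  -- the three cardinalities
  have hden : (S.filter (fun x => edgeProfile P x = v)).card = ∏ i, n i := by
    have h1 : S.filter (fun x => edgeProfile P x = v)
        = univ.filter (fun x : Fin N → Bool => ∀ i, lcond i (fun b => x b.1)) := by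
      rw [hSfull]
      ext y
      simp only [mem_filter, mem_univ, true_and]
      exact hprofiff y
    rw [h1, hcount lcond]
  have hnum : ((S.filter (fun x => edgeProfile P x = v)).filter
        (fun x => ∀ i, (∀ e ∈ I i, x e = true) ∧ (∀ e ∈ O i, x e = false))).card
      = ∏ i, a i := by
    have h1 : (S.filter (fun x => edgeProfile P x = v)).filter
          (fun x => ∀ i, (∀ e ∈ I i, x e = true) ∧ (∀ e ∈ O i, x e = false))
        = univ.filter (fun x : Fin N → Bool =>
            ∀ i, lcond i (fun b => x b.1) ∧ acond i (fun b => x b.1)) := by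
      rw [hSfull]
      ext y
      simp only [mem_filter, mem_univ, true_and]
      constructor
      · rintro ⟨h1, h2⟩ i
        exact ⟨(hprofiff y).mp h1 i, (hA y i).mp (h2 i)⟩
      · intro h
        exact ⟨(hprofiff y).mpr (fun i => (h i).1), fun i => (hA y i).mpr (h i).2⟩
    rw [h1, hcount (fun i g => lcond i g ∧ acond i g)]
  have hside : ∀ i : Fin k, ((S.filter (fun x => edgeProfile P x = v)).filter
        (fun x => (∀ e ∈ I i, x e = true) ∧ (∀ e ∈ O i, x e = false))).card
      = a i * ∏ j ∈ univ.erase i, n j := by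
    intro i
    have h1 : (S.filter (fun x => edgeProfile P x = v)).filter
          (fun x => (∀ e ∈ I i, x e = true) ∧ (∀ e ∈ O i, x e = false))
        = univ.filter (fun x : Fin N → Bool =>
            ∀ j, lcond j (fun b => x b.1) ∧ (j = i → acond j (fun b => x b.1))) := by
      rw [hSfull]
      ext y
      simp only [mem_filter, mem_univ, true_and]
      constructor
      · rintro ⟨h1, h2⟩ j
        exact ⟨(hprofiff y).mp h1 j, fun hj => hj ▸ (hA y i).mp h2⟩
      · intro h
        refine ⟨(hprofiff y).mpr (fun j => (h j).1), (hA y i).mpr ((h i).2 rfl)⟩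
    rw [h1, hcount (fun j g => lcond j g ∧ (j = i → acond j g))]
    rw [← Finset.mul_prod_erase univ _ (mem_univ i)]
    congr 1
    · exact Fintype.card_congr (Equiv.subtypeEquivRight (fun g => by simp))
    · refine Finset.prod_congr rfl fun j hj => ?_
      have hji : j ≠ i := (Finset.mem_erase.mp hj).1
      exact Fintype.card_congr (Equiv.subtypeEquivRight (fun g => by simp [hji]))
  rw [hden, hnum, Finset.prod_congr rfl fun i _ => hside i, Finset.prod_mul_distrib]
  congr 1
  rw [Finset.prod_comm' (t' := univ) (s' := fun j => univ.erase j)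
    (fun i j => by simp only [mem_univ, true_and, and_true, Finset.mem_erase]; exact ne_comm)]
  have hce : ∀ j : Fin k, (univ.erase j).card = k - 1 := by
    intro j
    rw [Finset.card_erase_of_mem (mem_univ j), card_univ, Fintype.card_fin]
  calc (∏ i, n i) ^ (k - 1) = ∏ j, n j ^ (k - 1) := (Finset.prod_pow _ _ _).symm
    _ = ∏ j, ∏ _i ∈ univ.erase j, n j := by
        refine Finset.prod_congr rfl fun j _ => ?_
        rw [Finset.prod_const, hce j]
end

section
/- Coupling lemma for uniform subsets and Bernoulli subsets: Let A be a finite set with |A| = N ≥ 1, let m be an integer with 1 ≤ m ≤ N, let δ ∈ (0,1), and assume m ≤ (1−δ)·N. Set p⁻ = m/((1+δ)·N) and p⁺ = m/((1−δ)·N) (so 0 < p⁻ ≤ p⁺ ≤ 1). Then there exists a probability mass function κ on triples (Z⁻, X, Z⁺) of subsets of A such that: (i) the marginal of X is uniform over all m-element subsets of A; (ii) for each sign ±, the marginal of Z^± assigns to each subset T ⊆ A probability (p^±)^{|T|}·(1−p^±)^{N−|T|}; and (iii) κ({(Z⁻, X, Z⁺) : Z⁻ ⊆ X ⊆ Z⁺})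 ≥ 1 − 2·exp(−δ²·m/(3(1+δ))). -/
open Finset

set_option linter.unusedSectionVars false
set_option maxHeartbeats 1000000

namespace Stmt9Aux

variable {α : Type} [Fintype α] [DecidableEq α]

lemma sum_powerset_card (s : Finset α) (f : ℕ → ℝ) :
    ∑ T ∈ s.powerset, f T.card = ∑ k ∈ Finset.range (s.card + 1), (s.card.choose k : ℝ) * f k := by
  rw [Finset.sum_powerset_apply_card]
  simp only [nsmul_eq_mul]

lemma sum_univ_card (f : ℕ → ℝ) :
    ∑ T : Finset α, f T.card
      = ∑ k ∈ Finset.range (Fintype.card α + 1), ((Fintype.card α).choose k : ℝ) * f k := by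
  rw [← Finset.powerset_univ, sum_powerset_card]
  simp [Finset.card_univ]

lemma binom_sum (p : ℝ) (N : ℕ) :
    ∑ k ∈ Finset.range (N + 1), ((N.choose k : ℝ) * (p ^ k * (1 - p) ^ (N - k))) = 1 := by
  have h := add_pow p (1 - p) N
  simp only [add_sub_cancel, one_pow] at h
  rw [show ∑ k ∈ Finset.range (N + 1), ((N.choose k : ℝ) * (p ^ k * (1 - p) ^ (N - k)))
      = ∑ k ∈ Finset.range (N + 1), (p ^ k * (1 - p) ^ (N - k) * (N.choose k : ℝ))
    from Finset.sum_congr rfl fun k _ => by ring, ← h]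

lemma sum_superset_eq (X : Finset α) (f : Finset α → ℝ) :
    ∑ Z : Finset α, (if X ⊆ Z then f Z else 0)
      = ∑ S ∈ (Finset.univ \ X).powerset, f (S ∪ X) := by
  rw [← Finset.sum_filter]
  refine Finset.sum_nbij' (fun Z => Z \ X) (fun S => S ∪ X) ?_ ?_ ?_ ?_ ?_
  · intro Z hZ
    simp only [Finset.mem_filter, Finset.mem_univ, true_and] at hZ
    simp only [Finset.mem_powerset]
    intro a ha
    simp only [Finset.mem_sdiff] at ha ⊢
    exact ⟨Finset.mem_univ a, ha.2⟩
  · intro S hS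
    simp only [Finset.mem_powerset] at hS
    simp only [Finset.mem_filter, Finset.mem_univ, true_and]
    exact Finset.subset_union_right
  · intro Z hZ
    simp only [Finset.mem_filter, Finset.mem_univ, true_and] at hZ
    exact Finset.sdiff_union_of_subset hZ
  · intro S hS
    simp only [Finset.mem_powerset] at hS
    apply Finset.union_sdiff_cancel_right
    rw [Finset.disjoint_right]
    intro a haX haS
    have := hS haS
    simp only [Finset.mem_sdiff] at this
    exact this.2 haX
  · intro Z hZ
    simp only [Finset.mem_filter, Finset.mem_univ, true_and] at hZ
    rw [Finset.sdiff_union_of_subset hZ]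

lemma sum_subset_eq (X : Finset α) (f : Finset α → ℝ) :
    ∑ Z : Finset α, (if Z ⊆ X then f Z else 0) = ∑ Z ∈ X.powerset, f Z := by
  rw [← Finset.sum_filter]
  apply Finset.sum_congr _ (fun _ _ => rfl)
  ext Z
  simp [Finset.mem_powerset]

lemma sum_choose_ite (n j : ℕ) (hj : j ≤ n) (c : ℝ) :
    ∑ k ∈ Finset.range (n+1), (n.choose k : ℝ) * (if k = j then c else 0)
      = (n.choose j : ℝ) * c := by
  rw [Finset.sum_congr rfl (fun k _ => by rw [mul_ite, mul_zero])]
  rw [Finset.sum_ite_eq' (Finset.range (n+1)) j (fun k => (n.choose k : ℝ) * c)]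
  rw [if_pos (Finset.mem_range.2 (Nat.lt_succ_of_le hj))]

noncomputable def ber (p : ℝ) (T : Finset α) : ℝ :=
  p ^ T.card * (1 - p) ^ (Fintype.card α - T.card)

noncomputable def qd (m : ℕ) (Z X : Finset α) : ℝ :=
  if X.card = m then
    (if Z.card ≤ m then
      (if Z ⊆ X then (((Fintype.card α - Z.card).choose (m - Z.card) : ℝ))⁻¹ else 0)
    else (((Fintype.card α).choose m : ℝ))⁻¹)
  else 0

noncomputable def rd (m : ℕ) (Z X : Finset α) : ℝ :=
  if X.card = m then
    (if m ≤ Z.card then (if X ⊆ Z then ((Z.card.choose m : ℝ))⁻¹ else 0)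
    else (((Fintype.card α).choose m : ℝ))⁻¹)
  else 0

lemma ber_nonneg {p : ℝ} (hp0 : 0 ≤ p) (hp1 : p ≤ 1) (T : Finset α) : 0 ≤ ber p T := by
  have : (0:ℝ) ≤ 1 - p := by linarith
  unfold ber; positivity

lemma qd_nonneg (m : ℕ) (Z X : Finset α) : 0 ≤ qd m Z X := by
  unfold qd; split_ifs <;> positivity

lemma rd_nonneg (m : ℕ) (Z X : Finset α) : 0 ≤ rd m Z X := by
  unfold rd; split_ifs <;> positivity

lemma card_univ_sdiff (Z : Finset α) : (Finset.univ \ Z).card = Fintype.card α - Z.card := by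
  rw [Finset.card_sdiff_of_subset (Finset.subset_univ Z), Finset.card_univ]

lemma qd_sum (m : ℕ) (hm : m ≤ Fintype.card α) (Z : Finset α) :
    ∑ X : Finset α, qd m Z X = 1 := by
  by_cases hZm : Z.card ≤ m
  · set c : ℝ := (((Fintype.card α - Z.card).choose (m - Z.card) : ℝ))⁻¹ with hc
    have h1 : ∀ X : Finset α, qd m Z X
        = (if Z ⊆ X then (if X.card = m then c else 0) else 0) := by
      intro X
      unfold qd
      split_ifs <;> rfl
    rw [Finset.sum_congr rfl (fun X _ => h1 X), sum_superset_eq]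
    have h2 : ∀ S ∈ (Finset.univ \ Z).powerset,
        (if (S ∪ Z).card = m then c else 0) = (if S.card = m - Z.card then c else 0) := by
      intro S hS
      rw [Finset.mem_powerset] at hS
      have hdisj : Disjoint S Z := by
        rw [Finset.disjoint_right]
        intro a haZ haS
        have := hS haS
        rw [Finset.mem_sdiff] at this
        exact this.2 haZ
      rw [Finset.card_union_of_disjoint hdisj]
      congr 1
      simp only [eq_iff_iff]
      omega
    rw [Finset.sum_congr rfl h2,
      sum_powerset_card (Finset.univ \ Z) (fun k => if k = m - Z.card then c else 0),
      card_univ_sdiff, sum_choose_ite _ _ (Nat.sub_le_sub_right hm _)]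
    rw [hc, mul_inv_cancel₀]
    exact_mod_cast (Nat.choose_pos (Nat.sub_le_sub_right hm _)).ne'
  · have h1 : ∀ X : Finset α, qd m Z X
        = if X.card = m then (((Fintype.card α).choose m : ℝ))⁻¹ else 0 := by
      intro X
      unfold qd
      split_ifs <;> simp_all
    rw [Finset.sum_congr rfl (fun X _ => h1 X),
      sum_univ_card (fun k => if k = m then (((Fintype.card α).choose m : ℝ))⁻¹ else 0),
      sum_choose_ite _ _ hm]
    rw [mul_inv_cancel₀]
    exact_mod_cast (Nat.choose_pos hm).ne'

lemma rd_sum (m : ℕ) (hm : m ≤ Fintype.card α) (Z : Finset α) :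
    ∑ X : Finset α, rd m Z X = 1 := by
  by_cases hZm : m ≤ Z.card
  · set c : ℝ := ((Z.card.choose m : ℝ))⁻¹ with hc
    have h1 : ∀ X : Finset α, rd m Z X
        = (if X ⊆ Z then (if X.card = m then c else 0) else 0) := by
      intro X
      unfold rd
      split_ifs <;> rfl
    rw [Finset.sum_congr rfl (fun X _ => h1 X), sum_subset_eq]
    rw [sum_powerset_card Z (fun k => if k = m then c else 0), sum_choose_ite _ _ hZm, hc,
      mul_inv_cancel₀]
    exact_mod_cast (Nat.choose_pos hZm).ne'
  · have h1 : ∀ X : Finset α, rd m Z X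
        = if X.card = m then (((Fintype.card α).choose m : ℝ))⁻¹ else 0 := by
      intro X
      unfold rd
      split_ifs <;> simp_all
    rw [Finset.sum_congr rfl (fun X _ => h1 X),
      sum_univ_card (fun k => if k = m then (((Fintype.card α).choose m : ℝ))⁻¹ else 0),
      sum_choose_ite _ _ hm]
    rw [mul_inv_cancel₀]
    exact_mod_cast (Nat.choose_pos hm).ne'

lemma choose_ratio {N m k : ℕ} (hk : k ≤ m) (hm : m ≤ N) :
    (m.choose k : ℝ) * (((N - k).choose (m - k) : ℝ))⁻¹
      = (N.choose k : ℝ) * ((N.choose m : ℝ))⁻¹ := by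
  have h := Nat.choose_mul (n := N) hk
  have h1 : (0:ℝ) < ((N - k).choose (m - k) : ℝ) := by
    exact_mod_cast Nat.choose_pos (by omega)
  have h2 : (0:ℝ) < (N.choose m : ℝ) := by exact_mod_cast Nat.choose_pos hm
  have hR : (N.choose m : ℝ) * (m.choose k : ℝ)
      = (N.choose k : ℝ) * ((N - k).choose (m - k) : ℝ) := by exact_mod_cast h
  field_simp
  linear_combination hR

lemma choose_ratio2 {N m j : ℕ} (hj : j + m ≤ N) :
    (((N - m).choose j : ℝ)) * (((j + m).choose m : ℝ))⁻¹
      = (N.choose (j + m) : ℝ) * ((N.choose m : ℝ))⁻¹ := by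
  have h := Nat.choose_mul (n := N) (show m ≤ j + m by omega)
  have hjm : j + m - m = j := by omega
  rw [hjm] at h
  have h1 : (0:ℝ) < (((j + m).choose m : ℝ)) := by
    exact_mod_cast Nat.choose_pos (show m ≤ j + m by omega)
  have h2 : (0:ℝ) < (N.choose m : ℝ) := by
    exact_mod_cast Nat.choose_pos (show m ≤ N by omega)
  have hR : (N.choose (j + m) : ℝ) * (((j + m).choose m : ℝ))
      = (N.choose m : ℝ) * (((N - m).choose j : ℝ)) := by exact_mod_cast h
  field_simp
  linear_combination -hR

lemma split_range_sum (N m : ℕ) (hm : m ≤ N) (a : ℕ → ℝ) :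
    (∑ k ∈ Finset.range (m+1), a k) + (∑ k ∈ Finset.range (N+1), if m < k then a k else 0)
      = ∑ k ∈ Finset.range (N+1), a k := by
  have h1 : ∑ k ∈ Finset.range (m+1), a k
      = ∑ k ∈ Finset.range (N+1), (if k ≤ m then a k else 0) := by
    rw [← Finset.sum_subset (Finset.range_subset_range.2 (show m + 1 ≤ N + 1 by omega))
      (fun x hx hnx => if_neg (by simp only [Finset.mem_range] at hx hnx; omega))]
    exact Finset.sum_congr rfl fun k hk =>
      (if_pos (by simp only [Finset.mem_range] at hk; omega)).symm
  rw [h1, ← Finset.sum_add_distrib]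
  refine Finset.sum_congr rfl fun k _ => ?_
  by_cases h : k ≤ m
  · rw [if_pos h, if_neg (by omega), add_zero]
  · rw [if_neg h, if_pos (by omega), zero_add]

lemma split_range_sum' (N m : ℕ) (hm : m ≤ N) (a : ℕ → ℝ) :
    (∑ k ∈ Finset.Ico m (N+1), a k) + (∑ k ∈ Finset.range (N+1), if k < m then a k else 0)
      = ∑ k ∈ Finset.range (N+1), a k := by
  have h1 : ∑ k ∈ Finset.Ico m (N+1), a k
      = ∑ k ∈ Finset.range (N+1), (if m ≤ k then a k else 0) := by
    rw [Finset.range_eq_Ico]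
    rw [← Finset.sum_subset (Finset.Ico_subset_Ico (Nat.zero_le m) le_rfl)
      (fun x hx hnx => if_neg (by simp only [Finset.mem_Ico] at hx hnx; omega))]
    exact Finset.sum_congr rfl fun k hk =>
      (if_pos (by simp only [Finset.mem_Ico] at hk; omega)).symm
  rw [h1, ← Finset.sum_add_distrib]
  refine Finset.sum_congr rfl fun k _ => ?_
  by_cases h : m ≤ k
  · rw [if_pos h, if_neg (by omega), add_zero]
  · rw [if_neg h, if_pos (by omega), zero_add]

lemma qd_wsum (m : ℕ) (hm : m ≤ Fintype.card α) (p : ℝ) (X : Finset α) :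
    ∑ Z : Finset α, ber p Z * qd m Z X
      = if X.card = m then (((Fintype.card α).choose m : ℝ))⁻¹ else 0 := by
  set N := Fintype.card α with hN
  by_cases hX : X.card = m
  swap
  · rw [if_neg hX]
    refine Finset.sum_eq_zero fun Z _ => ?_
    unfold qd
    rw [if_neg hX, mul_zero]
  rw [if_pos hX]
  set C : ℝ := ((N.choose m : ℝ))⁻¹ with hC
  have hsplit : ∀ Z : Finset α, ber p Z * qd m Z X
      = (if Z ⊆ X then ber p Z * (((N - Z.card).choose (m - Z.card) : ℝ))⁻¹ else 0)
        + (if m < Z.card then ber p Z * C else 0) := by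
    intro Z
    unfold qd
    rw [if_pos hX]
    by_cases h1 : Z ⊆ X
    · have h2 : Z.card ≤ m := hX ▸ Finset.card_le_card h1
      rw [if_pos h2, if_pos h1, if_pos h1, if_neg (by omega), add_zero]
    · rw [if_neg h1, if_neg h1]
      by_cases h2 : Z.card ≤ m
      · rw [if_pos h2, if_neg (by omega)]
        simp
      · rw [if_neg h2, if_pos (by omega), zero_add]
  rw [Finset.sum_congr rfl (fun Z _ => hsplit Z), Finset.sum_add_distrib]
  have hS1 : (∑ Z : Finset α,
        if Z ⊆ X then ber p Z * (((N - Z.card).choose (m - Z.card) : ℝ))⁻¹ else 0)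
      = ∑ k ∈ Finset.range (m+1), ((N.choose k : ℝ) * (p^k * (1-p)^(N-k))) * C := by
    rw [sum_subset_eq X (fun Z => ber p Z * (((N - Z.card).choose (m - Z.card) : ℝ))⁻¹)]
    simp only [ber]
    rw [sum_powerset_card X (fun k => p^k * (1-p)^(N-k) * (((N - k).choose (m - k) : ℝ))⁻¹), hX]
    refine Finset.sum_congr rfl fun k hk => ?_
    have hkm : k ≤ m := by simp only [Finset.mem_range] at hk; omega
    have := choose_ratio (N := N) hkm hm
    calc (m.choose k : ℝ) * (p^k * (1-p)^(N-k) * (((N - k).choose (m - k) : ℝ))⁻¹)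
        = ((m.choose k : ℝ) * (((N - k).choose (m - k) : ℝ))⁻¹) * (p^k * (1-p)^(N-k)) := by ring
      _ = ((N.choose k : ℝ) * C) * (p^k * (1-p)^(N-k)) := by rw [this]
      _ = ((N.choose k : ℝ) * (p^k * (1-p)^(N-k))) * C := by ring
  have hS2 : (∑ Z : Finset α, if m < Z.card then ber p Z * C else 0)
      = ∑ k ∈ Finset.range (N+1),
          (if m < k then ((N.choose k : ℝ) * (p^k * (1-p)^(N-k))) * C else 0) := by
    simp only [ber]
    rw [sum_univ_card (fun k => if m < k then p^k * (1-p)^(N-k) * C else 0)]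
    refine Finset.sum_congr rfl fun k _ => ?_
    split_ifs <;> ring
  rw [hS1, hS2, split_range_sum N m hm (fun k => ((N.choose k : ℝ) * (p^k * (1-p)^(N-k))) * C),
    ← Finset.sum_mul, binom_sum, one_mul]

lemma rd_wsum (m : ℕ) (hm : m ≤ Fintype.card α) (p : ℝ) (X : Finset α) :
    ∑ Z : Finset α, ber p Z * rd m Z X
      = if X.card = m then (((Fintype.card α).choose m : ℝ))⁻¹ else 0 := by
  set N := Fintype.card α with hN
  by_cases hX : X.card = m
  swap
  · rw [if_neg hX]
    refine Finset.sum_eq_zero fun Z _ => ?_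
    unfold rd
    rw [if_neg hX, mul_zero]
  rw [if_pos hX]
  set C : ℝ := ((N.choose m : ℝ))⁻¹ with hC
  have hsplit : ∀ Z : Finset α, ber p Z * rd m Z X
      = (if X ⊆ Z then ber p Z * ((Z.card.choose m : ℝ))⁻¹ else 0)
        + (if Z.card < m then ber p Z * C else 0) := by
    intro Z
    unfold rd
    rw [if_pos hX]
    by_cases h1 : X ⊆ Z
    · have h2 : m ≤ Z.card := hX ▸ Finset.card_le_card h1
      rw [if_pos h2, if_pos h1, if_pos h1, if_neg (by omega), add_zero]
    · rw [if_neg h1, if_neg h1]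
      by_cases h2 : m ≤ Z.card
      · rw [if_pos h2, if_neg (by omega)]
        simp
      · rw [if_neg h2, if_pos (by omega), zero_add]
  rw [Finset.sum_congr rfl (fun Z _ => hsplit Z), Finset.sum_add_distrib]
  have hS1 : (∑ Z : Finset α, if X ⊆ Z then ber p Z * ((Z.card.choose m : ℝ))⁻¹ else 0)
      = ∑ k ∈ Finset.Ico m (N+1), ((N.choose k : ℝ) * (p^k * (1-p)^(N-k))) * C := by
    rw [sum_superset_eq X (fun Z => ber p Z * ((Z.card.choose m : ℝ))⁻¹)]
    have hstep : ∀ S ∈ (Finset.univ \ X).powerset,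
        ber p (S ∪ X) * (((S ∪ X).card.choose m : ℝ))⁻¹
          = (fun j => p^(j+m) * (1-p)^(N-(j+m)) * (((j+m).choose m : ℝ))⁻¹) S.card := by
      intro S hS
      rw [Finset.mem_powerset] at hS
      have hdisj : Disjoint S X := by
        rw [Finset.disjoint_right]
        intro a haX haS
        have := hS haS
        rw [Finset.mem_sdiff] at this
        exact this.2 haX
      have hcard : (S ∪ X).card = S.card + m := by
        rw [Finset.card_union_of_disjoint hdisj, hX]
      simp only [ber, hcard]
      rfl
    rw [Finset.sum_congr rfl hstep,
      sum_powerset_card (Finset.univ \ X)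
        (fun j => p^(j+m) * (1-p)^(N-(j+m)) * (((j+m).choose m : ℝ))⁻¹),
      card_univ_sdiff, hX]
    have hIco : ∑ k ∈ Finset.Ico m (N+1), ((N.choose k : ℝ) * (p^k * (1-p)^(N-k))) * C
        = ∑ j ∈ Finset.range (N+1-m),
            ((N.choose (m+j) : ℝ) * (p^(m+j) * (1-p)^(N-(m+j)))) * C :=
      Finset.sum_Ico_eq_sum_range (fun k => ((N.choose k : ℝ) * (p^k * (1-p)^(N-k))) * C) m (N+1)
    rw [hIco]
    have hrange : N + 1 - m = N - m + 1 := by omega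
    rw [hrange]
    refine Finset.sum_congr rfl fun j hj => ?_
    have hjm : j + m ≤ N := by simp only [Finset.mem_range] at hj; omega
    have := choose_ratio2 (N := N) (m := m) hjm
    have hcomm : m + j = j + m := by omega
    rw [hcomm]
    calc ((N - m).choose j : ℝ) * (p^(j+m) * (1-p)^(N-(j+m)) * (((j+m).choose m : ℝ))⁻¹)
        = (((N - m).choose j : ℝ) * (((j+m).choose m : ℝ))⁻¹) * (p^(j+m) * (1-p)^(N-(j+m))) := by
          ring
      _ = ((N.choose (j+m) : ℝ) * C) * (p^(j+m) * (1-p)^(N-(j+m))) := by rw [this]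
      _ = ((N.choose (j+m) : ℝ) * (p^(j+m) * (1-p)^(N-(j+m)))) * C := by ring
  have hS2 : (∑ Z : Finset α, if Z.card < m then ber p Z * C else 0)
      = ∑ k ∈ Finset.range (N+1),
          (if k < m then ((N.choose k : ℝ) * (p^k * (1-p)^(N-k))) * C else 0) := by
    simp only [ber]
    rw [sum_univ_card (fun k => if k < m then p^k * (1-p)^(N-k) * C else 0)]
    refine Finset.sum_congr rfl fun k _ => ?_
    split_ifs <;> ring
  rw [hS1, hS2, split_range_sum' N m hm (fun k => ((N.choose k : ℝ) * (p^k * (1-p)^(N-k))) * C),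
    ← Finset.sum_mul, binom_sum, one_mul]

lemma exp_quad {x : ℝ} (h0 : |x| ≤ 1) : Real.exp x ≤ 1 + x + (3/4) * x^2 := by
  have h := Real.exp_bound h0 (n := 2) (by norm_num)
  have h2 : ∑ i ∈ Finset.range 2, x ^ i / (Nat.factorial i) = 1 + x := by
    simp [Finset.sum_range_succ]
  rw [h2] at h
  have h3 := (abs_sub_le_iff.1 h).1
  have h4 : |x| ^ 2 = x ^ 2 := sq_abs x
  rw [h4] at h3
  norm_num at h3 ⊢
  nlinarith

lemma chernoff_upper (p l : ℝ) (hp0 : 0 ≤ p) (hp1 : p ≤ 1) (hl : 0 ≤ l) (N m : ℕ) :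
    ∑ k ∈ Finset.range (N+1), (if m < k then (N.choose k : ℝ) * (p^k * (1-p)^(N-k)) else 0)
      ≤ Real.exp ((N:ℝ) * p * (Real.exp l - 1) - l * m) := by
  have hq : (0:ℝ) ≤ 1 - p := by linarith
  have step1 : ∀ k ∈ Finset.range (N+1),
      (if m < k then (N.choose k : ℝ) * (p^k * (1-p)^(N-k)) else 0)
        ≤ (N.choose k : ℝ) * ((p * Real.exp l)^k * (1-p)^(N-k)) * Real.exp (-(l*m)) := by
    intro k _
    have hEk : (Real.exp l)^k = Real.exp (l*k) := by
      rw [← Real.exp_nat_mul, mul_comm]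
    have hrhs : (N.choose k : ℝ) * ((p * Real.exp l)^k * (1-p)^(N-k)) * Real.exp (-(l*m))
        = ((N.choose k : ℝ) * (p^k * (1-p)^(N-k))) * (Real.exp (l*k) * Real.exp (-(l*m))) := by
      rw [mul_pow, hEk]; ring
    rw [hrhs]
    split_ifs with h
    · apply le_mul_of_one_le_right
      · positivity
      · rw [← Real.exp_add]
        apply Real.one_le_exp
        have : (m:ℝ) + 1 ≤ k := by exact_mod_cast h
        nlinarith
    · positivity
  calc ∑ k ∈ Finset.range (N+1), (if m < k then (N.choose k : ℝ) * (p^k * (1-p)^(N-k)) else 0)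
      ≤ ∑ k ∈ Finset.range (N+1),
          (N.choose k : ℝ) * ((p * Real.exp l)^k * (1-p)^(N-k)) * Real.exp (-(l*m)) :=
        Finset.sum_le_sum step1
    _ = (p * Real.exp l + (1-p))^N * Real.exp (-(l*m)) := by
        rw [add_pow, Finset.sum_mul]
        exact Finset.sum_congr rfl fun k _ => by ring
    _ ≤ (Real.exp (p * (Real.exp l - 1)))^N * Real.exp (-(l*m)) := by
        apply mul_le_mul_of_nonneg_right _ (Real.exp_pos _).le
        apply pow_le_pow_left₀ (by positivity)
        calc p * Real.exp l + (1-p) = (p * (Real.exp l - 1)) + 1 := by ring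
          _ ≤ Real.exp (p * (Real.exp l - 1)) := Real.add_one_le_exp _
    _ = Real.exp ((N:ℝ) * p * (Real.exp l - 1) - l * m) := by
        rw [← Real.exp_nat_mul, ← Real.exp_add]
        congr 1
        ring

lemma chernoff_lower (p l : ℝ) (hp0 : 0 ≤ p) (hp1 : p ≤ 1) (hl : 0 ≤ l) (N m : ℕ) :
    ∑ k ∈ Finset.range (N+1), (if k < m then (N.choose k : ℝ) * (p^k * (1-p)^(N-k)) else 0)
      ≤ Real.exp ((N:ℝ) * p * (Real.exp (-l) - 1) + l * m) := by
  have hq : (0:ℝ) ≤ 1 - p := by linarith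
  have step1 : ∀ k ∈ Finset.range (N+1),
      (if k < m then (N.choose k : ℝ) * (p^k * (1-p)^(N-k)) else 0)
        ≤ (N.choose k : ℝ) * ((p * Real.exp (-l))^k * (1-p)^(N-k)) * Real.exp (l*m) := by
    intro k _
    have hEk : (Real.exp (-l))^k = Real.exp (-(l*k)) := by
      rw [← Real.exp_nat_mul]; congr 1; ring
    have hrhs : (N.choose k : ℝ) * ((p * Real.exp (-l))^k * (1-p)^(N-k)) * Real.exp (l*m)
        = ((N.choose k : ℝ) * (p^k * (1-p)^(N-k))) * (Real.exp (-(l*k)) * Real.exp (l*m)) := by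
      rw [mul_pow, hEk]; ring
    rw [hrhs]
    split_ifs with h
    · apply le_mul_of_one_le_right
      · positivity
      · rw [← Real.exp_add]
        apply Real.one_le_exp
        have : (k:ℝ) ≤ m := by exact_mod_cast h.le
        nlinarith
    · positivity
  calc ∑ k ∈ Finset.range (N+1), (if k < m then (N.choose k : ℝ) * (p^k * (1-p)^(N-k)) else 0)
      ≤ ∑ k ∈ Finset.range (N+1),
          (N.choose k : ℝ) * ((p * Real.exp (-l))^k * (1-p)^(N-k)) * Real.exp (l*m) :=
        Finset.sum_le_sum step1
    _ = (p * Real.exp (-l) + (1-p))^N * Real.exp (l*m) := by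
        rw [add_pow, Finset.sum_mul]
        exact Finset.sum_congr rfl fun k _ => by ring
    _ ≤ (Real.exp (p * (Real.exp (-l) - 1)))^N * Real.exp (l*m) := by
        apply mul_le_mul_of_nonneg_right _ (Real.exp_pos _).le
        apply pow_le_pow_left₀ (by positivity)
        calc p * Real.exp (-l) + (1-p) = (p * (Real.exp (-l) - 1)) + 1 := by ring
          _ ≤ Real.exp (p * (Real.exp (-l) - 1)) := Real.add_one_le_exp _
    _ = Real.exp ((N:ℝ) * p * (Real.exp (-l) - 1) + l * m) := by
        rw [← Real.exp_nat_mul, ← Real.exp_add]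
        congr 1
        ring

lemma exponent_up (δ : ℝ) (m : ℕ) (hδ0 : 0 < δ) (hδ1 : δ < 1) :
    ((m:ℝ)/(1+δ)) * (Real.exp (2*δ/3) - 1) - (2*δ/3) * m ≤ -(δ^2 * m/(3*(1+δ))) := by
  have hm : (0:ℝ) ≤ m := Nat.cast_nonneg m
  have hE : Real.exp (2*δ/3) - 1 ≤ 2*δ/3 + δ^2/3 := by
    have := exp_quad (x := 2*δ/3) (by rw [abs_of_nonneg (by linarith)]; linarith)
    nlinarith
  have hc : (0:ℝ) ≤ (m:ℝ)/(1+δ) := by positivity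
  have key : ((m:ℝ)/(1+δ)) * (2*δ/3 + δ^2/3) - (2*δ/3) * m = -(δ^2 * m/(3*(1+δ))) := by
    field_simp
    ring
  calc ((m:ℝ)/(1+δ)) * (Real.exp (2*δ/3) - 1) - (2*δ/3) * m
      ≤ ((m:ℝ)/(1+δ)) * (2*δ/3 + δ^2/3) - (2*δ/3) * m := by
        apply sub_le_sub_right
        exact mul_le_mul_of_nonneg_left hE hc
    _ = -(δ^2 * m/(3*(1+δ))) := key

lemma exponent_low (δ : ℝ) (m : ℕ) (hδ0 : 0 < δ) (hδ1 : δ < 1) :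
    ((m:ℝ)/(1-δ)) * (Real.exp (-(2*δ/3)) - 1) + (2*δ/3) * m ≤ -(δ^2 * m/(3*(1+δ))) := by
  have hm : (0:ℝ) ≤ m := Nat.cast_nonneg m
  have h1δ : (0:ℝ) < 1 - δ := by linarith
  have hE : Real.exp (-(2*δ/3)) - 1 ≤ -(2*δ/3) + δ^2/3 := by
    have := exp_quad (x := -(2*δ/3)) (by rw [abs_of_nonpos (by linarith)]; linarith)
    nlinarith
  have hc : (0:ℝ) ≤ (m:ℝ)/(1-δ) := by positivity
  have key : ((m:ℝ)/(1-δ)) * (-(2*δ/3) + δ^2/3) + (2*δ/3) * m = -(δ^2 * m/(3*(1-δ))) := by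
    field_simp
    ring
  calc ((m:ℝ)/(1-δ)) * (Real.exp (-(2*δ/3)) - 1) + (2*δ/3) * m
      ≤ ((m:ℝ)/(1-δ)) * (-(2*δ/3) + δ^2/3) + (2*δ/3) * m := by
        apply add_le_add_left
        exact mul_le_mul_of_nonneg_left hE hc
    _ = -(δ^2 * m/(3*(1-δ))) := key
    _ ≤ -(δ^2 * m/(3*(1+δ))) := by
        apply neg_le_neg
        apply div_le_div_of_nonneg_left (by positivity) (by linarith) (by linarith)

end Stmt9Aux

open Stmt9Aux

/-- Coupling lemma for uniform `m`-subsets and Bernoulli subsets: for a finite set `A` of size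
`N ≥ 1`, `1 ≤ m ≤ N`, `δ ∈ (0,1)` with `m ≤ (1−δ)N`, and `p⁻ = m/((1+δ)N)`,
`p⁺ = m/((1−δ)N)`, there is a coupling `κ` of (Bernoulli `p⁻`, uniform `m`-subset,
Bernoulli `p⁺`) under which `Z⁻ ⊆ X ⊆ Z⁺` with probability at least
`1 − 2 exp(−δ² m / (3(1+δ)))`. -/
theorem stmt9 (α : Type) [Fintype α] [DecidableEq α] (N : ℕ) (hcard : Fintype.card α = N)
    (hN : 1 ≤ N) (m : ℕ) (hm1 : 1 ≤ m) (hmN : m ≤ N)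
    (δ : ℝ) (hδ0 : 0 < δ) (hδ1 : δ < 1) (hmδ : (m : ℝ) ≤ (1 - δ) * N) :
    ∃ κ : (Finset α × Finset α × Finset α) → ℝ,
      (∀ t, 0 ≤ κ t) ∧
      (∑ t : Finset α × Finset α × Finset α, κ t = 1) ∧
      -- (i) middle marginal: uniform over `m`-element subsets
      (∀ X : Finset α, (∑ Z₁ : Finset α, ∑ Z₂ : Finset α, κ (Z₁, X, Z₂)) =
        if X.card = m then 1 / (N.choose m : ℝ) else 0) ∧
      -- (ii) first marginal: Bernoulli `p⁻ = m/((1+δ)N)` subset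
      (∀ T : Finset α, (∑ X : Finset α, ∑ Z₂ : Finset α, κ (T, X, Z₂)) =
        ((m : ℝ) / ((1 + δ) * N)) ^ T.card *
          (1 - (m : ℝ) / ((1 + δ) * N)) ^ (N - T.card)) ∧
      -- (ii') third marginal: Bernoulli `p⁺ = m/((1−δ)N)` subset
      (∀ T : Finset α, (∑ Z₁ : Finset α, ∑ X : Finset α, κ (Z₁, X, T)) =
        ((m : ℝ) / ((1 - δ) * N)) ^ T.card *
          (1 - (m : ℝ) / ((1 - δ) * N)) ^ (N - T.card)) ∧
      -- (iii) nesting succeeds with high probability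
      (1 - 2 * Real.exp (-(δ ^ 2 * m / (3 * (1 + δ)))) ≤
        ∑ t ∈ Finset.univ.filter
          (fun t : Finset α × Finset α × Finset α => t.1 ⊆ t.2.1 ∧ t.2.1 ⊆ t.2.2), κ t) := by
  subst hcard
  have hNR : (0:ℝ) < (Fintype.card α : ℝ) := by exact_mod_cast hN
  have h1δ : (0:ℝ) < 1 + δ := by linarith
  have h2δ : (0:ℝ) < 1 - δ := by linarith
  have hmR : (m:ℝ) ≤ (Fintype.card α : ℝ) := by exact_mod_cast hmN
  set pm : ℝ := (m:ℝ)/((1+δ) * (Fintype.card α : ℝ)) with hpmdef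
  set pp : ℝ := (m:ℝ)/((1-δ) * (Fintype.card α : ℝ)) with hppdef
  have hpm0 : 0 ≤ pm := by rw [hpmdef]; positivity
  have hpp0 : 0 ≤ pp := by rw [hppdef]; positivity
  have hpm1 : pm ≤ 1 := by
    rw [hpmdef, div_le_one (by positivity)]
    nlinarith
  have hpp1 : pp ≤ 1 := by
    rw [hppdef, div_le_one (by positivity)]
    linarith
  set C : ℝ := (((Fintype.card α).choose m : ℝ)) with hCdef
  have hCpos : 0 < C := by rw [hCdef]; exact_mod_cast Nat.choose_pos hmN
  set κf : Finset α × Finset α × Finset α → ℝ :=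
    fun t => C * (ber pm t.1 * qd m t.1 t.2.1) * (ber pp t.2.2 * rd m t.2.2 t.2.1) with hκdef
  have hknn : ∀ t, 0 ≤ κf t := by
    intro t
    exact mul_nonneg (mul_nonneg hCpos.le
      (mul_nonneg (ber_nonneg hpm0 hpm1 _) (qd_nonneg _ _ _)))
      (mul_nonneg (ber_nonneg hpp0 hpp1 _) (rd_nonneg _ _ _))
  -- middle marginal
  have hmid : ∀ X : Finset α, (∑ Z₁ : Finset α, ∑ Z₂ : Finset α, κf (Z₁, X, Z₂))
      = if X.card = m then 1 / C else 0 := by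
    intro X
    simp only [hκdef]
    have h1 : ∀ Z₁ : Finset α,
        ∑ Z₂ : Finset α, C * (ber pm Z₁ * qd m Z₁ X) * (ber pp Z₂ * rd m Z₂ X)
          = (ber pm Z₁ * qd m Z₁ X) * (C * (if X.card = m then C⁻¹ else 0)) := by
      intro Z₁
      rw [← Finset.mul_sum, rd_wsum m hmN pp X, ← hCdef]
      ring
    rw [Finset.sum_congr rfl (fun Z₁ _ => h1 Z₁), ← Finset.sum_mul, qd_wsum m hmN pm X, ← hCdef]
    by_cases hX : X.card = m
    · simp only [if_pos hX]
      field_simp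
    · simp only [if_neg hX, zero_mul]
  -- first marginal
  have hfirst : ∀ T : Finset α, (∑ X : Finset α, ∑ Z₂ : Finset α, κf (T, X, Z₂))
      = ber pm T := by
    intro T
    simp only [hκdef]
    have h1 : ∀ X : Finset α,
        ∑ Z₂ : Finset α, C * (ber pm T * qd m T X) * (ber pp Z₂ * rd m Z₂ X)
          = ber pm T * qd m T X := by
      intro X
      rw [← Finset.mul_sum, rd_wsum m hmN pp X, ← hCdef]
      by_cases hX : X.card = m
      · rw [if_pos hX, mul_comm C (ber pm T * qd m T X), mul_assoc,
          mul_inv_cancel₀ hCpos.ne', mul_one]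
      · rw [if_neg hX, mul_zero]
        have hq0 : qd m T X = 0 := by unfold qd; rw [if_neg hX]
        rw [hq0, mul_zero]
    rw [Finset.sum_congr rfl (fun X _ => h1 X), ← Finset.mul_sum, qd_sum m hmN T, mul_one]
  -- third marginal
  have hthird : ∀ T : Finset α, (∑ Z₁ : Finset α, ∑ X : Finset α, κf (Z₁, X, T))
      = ber pp T := by
    intro T
    simp only [hκdef]
    rw [Finset.sum_comm]
    have h1 : ∀ X : Finset α,
        ∑ Z₁ : Finset α, C * (ber pm Z₁ * qd m Z₁ X) * (ber pp T * rd m T X)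
          = ber pp T * rd m T X := by
      intro X
      have h2 : ∑ Z₁ : Finset α, C * (ber pm Z₁ * qd m Z₁ X) * (ber pp T * rd m T X)
          = (∑ Z₁ : Finset α, ber pm Z₁ * qd m Z₁ X) * (C * (ber pp T * rd m T X)) := by
        rw [Finset.sum_mul]
        exact Finset.sum_congr rfl fun Z₁ _ => by ring
      rw [h2, qd_wsum m hmN pm X, ← hCdef]
      by_cases hX : X.card = m
      · rw [if_pos hX, ← mul_assoc, inv_mul_cancel₀ hCpos.ne', one_mul]
      · rw [if_neg hX, zero_mul]
        have hr0 : rd m T X = 0 := by unfold rd; rw [if_neg hX]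
        rw [hr0, mul_zero]
    rw [Finset.sum_congr rfl (fun X _ => h1 X), ← Finset.mul_sum, rd_sum m hmN T, mul_one]
  -- total mass
  have htotal : ∑ t : Finset α × Finset α × Finset α, κf t = 1 := by
    rw [Fintype.sum_prod_type]
    have h1 : ∀ Z₁ : Finset α, ∑ bc : Finset α × Finset α, κf (Z₁, bc)
        = ∑ X : Finset α, ∑ Z₂ : Finset α, κf (Z₁, X, Z₂) := fun Z₁ =>
      Fintype.sum_prod_type _
    rw [Finset.sum_congr rfl (fun Z₁ _ => h1 Z₁), Finset.sum_comm,
      Finset.sum_congr rfl (fun X _ => hmid X),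
      sum_univ_card (fun k => if k = m then 1 / C else 0),
      sum_choose_ite _ _ hmN, ← hCdef, mul_one_div, div_self hCpos.ne']
  -- tail bound 1
  have hNpm : (Fintype.card α : ℝ) * pm = (m:ℝ)/(1+δ) := by
    rw [hpmdef]; field_simp
  have hNpp : (Fintype.card α : ℝ) * pp = (m:ℝ)/(1-δ) := by
    rw [hppdef]; field_simp
  have hl0 : (0:ℝ) ≤ 2*δ/3 := by linarith
  have hbad1 : ∑ t : Finset α × Finset α × Finset α, (if m < t.1.card then κf t else 0)
      ≤ Real.exp (-(δ^2 * m/(3*(1+δ)))) := by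
    have hexp : ∑ t : Finset α × Finset α × Finset α, (if m < t.1.card then κf t else 0)
        = ∑ Z₁ : Finset α, (if m < Z₁.card then ber pm Z₁ else 0) := by
      calc ∑ t : Finset α × Finset α × Finset α, (if m < t.1.card then κf t else 0)
          = ∑ Z₁ : Finset α, ∑ bc : Finset α × Finset α,
              (if m < Z₁.card then κf (Z₁, bc) else 0) := Fintype.sum_prod_type _
        _ = ∑ Z₁ : Finset α, (if m < Z₁.card then ber pm Z₁ else 0) := by
            refine Finset.sum_congr rfl fun Z₁ _ => ?_
            by_cases h : m < Z₁.card
            · simp only [if_pos h]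
              rw [show (∑ bc : Finset α × Finset α, κf (Z₁, bc))
                  = ∑ X : Finset α, ∑ Z₂ : Finset α, κf (Z₁, X, Z₂) from Fintype.sum_prod_type _]
              exact hfirst Z₁
            · simp only [if_neg h, Finset.sum_const_zero]
    rw [hexp]
    simp only [ber]
    rw [sum_univ_card (fun k => if m < k then pm^k * (1-pm)^(Fintype.card α - k) else 0)]
    have h2 : ∑ k ∈ Finset.range (Fintype.card α + 1),
          ((Fintype.card α).choose k : ℝ) * (if m < k then pm^k * (1-pm)^(Fintype.card α - k) else 0)
        = ∑ k ∈ Finset.range (Fintype.card α + 1),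
          (if m < k then ((Fintype.card α).choose k : ℝ) * (pm^k * (1-pm)^(Fintype.card α - k)) else 0) := by
      refine Finset.sum_congr rfl fun k _ => ?_
      split_ifs <;> ring
    rw [h2]
    calc ∑ k ∈ Finset.range (Fintype.card α + 1),
          (if m < k then ((Fintype.card α).choose k : ℝ) * (pm^k * (1-pm)^(Fintype.card α - k)) else 0)
        ≤ Real.exp ((Fintype.card α : ℝ) * pm * (Real.exp (2*δ/3) - 1) - (2*δ/3) * m) :=
          chernoff_upper pm (2*δ/3) hpm0 hpm1 hl0 (Fintype.card α) m
      _ ≤ Real.exp (-(δ^2 * m/(3*(1+δ)))) := by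
          rw [hNpm]
          exact Real.exp_le_exp.mpr (exponent_up δ m hδ0 hδ1)
  -- tail bound 2
  have hbad2 : ∑ t : Finset α × Finset α × Finset α, (if t.2.2.card < m then κf t else 0)
      ≤ Real.exp (-(δ^2 * m/(3*(1+δ)))) := by
    have hexp : ∑ t : Finset α × Finset α × Finset α, (if t.2.2.card < m then κf t else 0)
        = ∑ Z₂ : Finset α, (if Z₂.card < m then ber pp Z₂ else 0) := by
      calc ∑ t : Finset α × Finset α × Finset α, (if t.2.2.card < m then κf t else 0)
          = ∑ Z₁ : Finset α, ∑ X : Finset α, ∑ Z₂ : Finset α,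
              (if Z₂.card < m then κf (Z₁, X, Z₂) else 0) := by
            rw [show (∑ t : Finset α × Finset α × Finset α, (if t.2.2.card < m then κf t else 0))
                = ∑ Z₁ : Finset α, ∑ bc : Finset α × Finset α,
                    (if bc.2.card < m then κf (Z₁, bc) else 0) from Fintype.sum_prod_type _]
            exact Finset.sum_congr rfl fun Z₁ _ => Fintype.sum_prod_type _
        _ = ∑ Z₁ : Finset α, ∑ Z₂ : Finset α, ∑ X : Finset α,
              (if Z₂.card < m then κf (Z₁, X, Z₂) else 0) :=
            Finset.sum_congr rfl fun Z₁ _ => Finset.sum_comm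
        _ = ∑ Z₂ : Finset α, ∑ Z₁ : Finset α, ∑ X : Finset α,
              (if Z₂.card < m then κf (Z₁, X, Z₂) else 0) := Finset.sum_comm
        _ = ∑ Z₂ : Finset α, (if Z₂.card < m then ber pp Z₂ else 0) := by
            refine Finset.sum_congr rfl fun Z₂ _ => ?_
            by_cases h : Z₂.card < m
            · simp only [if_pos h]
              exact hthird Z₂
            · simp only [if_neg h, Finset.sum_const_zero]
    rw [hexp]
    simp only [ber]
    rw [sum_univ_card (fun k => if k < m then pp^k * (1-pp)^(Fintype.card α - k) else 0)]
    have h2 : ∑ k ∈ Finset.range (Fintype.card α + 1),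
          ((Fintype.card α).choose k : ℝ) * (if k < m then pp^k * (1-pp)^(Fintype.card α - k) else 0)
        = ∑ k ∈ Finset.range (Fintype.card α + 1),
          (if k < m then ((Fintype.card α).choose k : ℝ) * (pp^k * (1-pp)^(Fintype.card α - k)) else 0) := by
      refine Finset.sum_congr rfl fun k _ => ?_
      split_ifs <;> ring
    rw [h2]
    calc ∑ k ∈ Finset.range (Fintype.card α + 1),
          (if k < m then ((Fintype.card α).choose k : ℝ) * (pp^k * (1-pp)^(Fintype.card α - k)) else 0)
        ≤ Real.exp ((Fintype.card α : ℝ) * pp * (Real.exp (-(2*δ/3)) - 1) + (2*δ/3) * m) :=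
          chernoff_lower pp (2*δ/3) hpp0 hpp1 hl0 (Fintype.card α) m
      _ ≤ Real.exp (-(δ^2 * m/(3*(1+δ)))) := by
          rw [hNpp]
          exact Real.exp_le_exp.mpr (exponent_low δ m hδ0 hδ1)
  -- vanishing of κ off the nesting event when cardinalities are fine
  have hzero : ∀ t : Finset α × Finset α × Finset α,
      ¬(t.1 ⊆ t.2.1 ∧ t.2.1 ⊆ t.2.2) → t.1.card ≤ m → m ≤ t.2.2.card → κf t = 0 := by
    rintro ⟨Z₁, X, Z₂⟩ hng h1 h2
    simp only [hκdef]
    by_cases hX : X.card = m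
    · by_cases hsub : Z₁ ⊆ X
      · have hsub2 : ¬ X ⊆ Z₂ := fun h => hng ⟨hsub, h⟩
        have hr : rd m Z₂ X = 0 := by unfold rd; rw [if_pos hX, if_pos h2, if_neg hsub2]
        rw [hr]
        ring
      · have hq : qd m Z₁ X = 0 := by unfold qd; rw [if_pos hX, if_pos h1, if_neg hsub]
        rw [hq]
        ring
    · have hq : qd m Z₁ X = 0 := by unfold qd; rw [if_neg hX]
      rw [hq]
      ring
  -- pointwise bound on the failure indicator
  have hpoint : ∀ t : Finset α × Finset α × Finset α,
      (if ¬(t.1 ⊆ t.2.1 ∧ t.2.1 ⊆ t.2.2) then κf t else 0)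
        ≤ (if m < t.1.card then κf t else 0) + (if t.2.2.card < m then κf t else 0) := by
    intro t
    have hA : 0 ≤ (if m < t.1.card then κf t else 0) := by
      split_ifs with h
      · exact hknn t
      · exact le_refl 0
    have hB : 0 ≤ (if t.2.2.card < m then κf t else 0) := by
      split_ifs with h
      · exact hknn t
      · exact le_refl 0
    by_cases hg : ¬(t.1 ⊆ t.2.1 ∧ t.2.1 ⊆ t.2.2)
    · rw [if_pos hg]
      by_cases h1 : m < t.1.card
      · rw [if_pos h1]
        linarith
      · by_cases h2 : t.2.2.card < m
        · rw [if_pos h2]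
          linarith
        · rw [hzero t hg (by omega) (by omega)]
          simp
    · rw [if_neg hg]
      linarith
  have hfail : (∑ t : Finset α × Finset α × Finset α,
      (if ¬(t.1 ⊆ t.2.1 ∧ t.2.1 ⊆ t.2.2) then κf t else 0))
        ≤ 2 * Real.exp (-(δ^2 * m/(3*(1+δ)))) := by
    calc (∑ t : Finset α × Finset α × Finset α,
        (if ¬(t.1 ⊆ t.2.1 ∧ t.2.1 ⊆ t.2.2) then κf t else 0))
        ≤ ∑ t : Finset α × Finset α × Finset α,
            ((if m < t.1.card then κf t else 0) + (if t.2.2.card < m then κf t else 0)) :=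
          Finset.sum_le_sum (fun t _ => hpoint t)
      _ = (∑ t : Finset α × Finset α × Finset α, (if m < t.1.card then κf t else 0))
          + ∑ t : Finset α × Finset α × Finset α, (if t.2.2.card < m then κf t else 0) :=
          Finset.sum_add_distrib
      _ ≤ Real.exp (-(δ^2 * m/(3*(1+δ)))) + Real.exp (-(δ^2 * m/(3*(1+δ)))) :=
          add_le_add hbad1 hbad2
      _ = 2 * Real.exp (-(δ^2 * m/(3*(1+δ)))) := by ring
  refine ⟨κf, hknn, htotal, ?_, ?_, ?_, ?_⟩
  · intro X
    rw [hmid X]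
  · intro T
    rw [hfirst T]
    simp only [ber]
  · intro T
    rw [hthird T]
    simp only [ber]
  · rw [Finset.sum_filter]
    have hsplit : ∀ t : Finset α × Finset α × Finset α,
        (if (t.1 ⊆ t.2.1 ∧ t.2.1 ⊆ t.2.2) then κf t else 0)
          = κf t - (if ¬(t.1 ⊆ t.2.1 ∧ t.2.1 ⊆ t.2.2) then κf t else 0) := by
      intro t
      by_cases hg : (t.1 ⊆ t.2.1 ∧ t.2.1 ⊆ t.2.2)
      · rw [if_pos hg, if_neg (not_not_intro hg), sub_zero]
      · rw [if_neg hg, if_pos hg, sub_self]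
    rw [Finset.sum_congr rfl (fun t _ => hsplit t), Finset.sum_sub_distrib, htotal]
    have : δ ^ 2 * (m:ℝ) / (3 * (1 + δ)) = δ^2 * m/(3*(1+δ)) := by ring
    rw [this]
    linarith
end
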